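/- Soundness of universal substitution (rule 5): if M ⊨_X ∀x A, and y does not occur free in ∀x A, then M ⊨_{X(M/y)} A(y/x). Consequently, if B follows semantically from A(y/x) together with side assumptions in which y does not occur free and which hold in X, then M ⊨_X ∀y B. -/

import Mathlib

open FirstOrder Language

/-- Formulas of independence logic over a first-order language `L`, with variables `ℕ`:
first-order formulas, conditional independence atoms `t1 ⊥_{t3} t2` (written
`indep t1 t2 t3`) between tuples (lists) of terms, conjunction, disjunction, and
existential and universal quantification. -/
inductive TeamFormula (L : Language) : Type _ where
  | fo (φ : L.Formula ℕ)
  | indep (t1 t2 t3 : List (L.Term ℕ))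
  | and (φ ψ : TeamFormula L)
  | or (φ ψ : TeamFormula L)
  | ex (x : ℕ) (φ : TeamFormula L)
  | all (x : ℕ) (φ : TeamFormula L)

namespace TeamFormula

variable {L : Language}

/-- The set of free variables of an independence-logic formula. -/
def Fr : TeamFormula L → Set ℕ
  | .fo φ => ↑φ.freeVarFinset
  | .indep t1 t2 t3 => ↑((t1 ++ t2 ++ t3).foldr (fun t s => t.varFinset ∪ s) ∅)
  | .and φ ψ => φ.Fr ∪ ψ.Fr
  | .or φ ψ => φ.Fr ∪ ψ.Fr
  | .ex x φ => φ.Fr \ {x}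
  | .all x φ => φ.Fr \ {x}

/-- A team is a set of assignments. -/
abbrev Team (M : Type*) := Set (ℕ → M)

/-- The value of a tuple (list) of terms under an assignment. -/
def listVal {M : Type*} [L.Structure M] (ts : List (L.Term ℕ)) (s : ℕ → M) : List M :=
  ts.map fun t => t.realize s

/-- Lax team semantics for independence logic.  First-order formulas are evaluated
pointwise; disjunction splits the team into a union; `∃x φ` is witnessed by a function
`F` from the team to nonempty sets of elements, extending the team to
`X(F/x) = {s(a/x) : s ∈ X, a ∈ F s}`; `∀x φ` duplicates the team to `X(M/x)`. -/
def Sat (M : Type*) [L.Structure M] : TeamFormula L → Team M → Prop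
  | .fo φ, X => ∀ s ∈ X, φ.Realize s
  | .indep t1 t2 t3, X => ∀ s ∈ X, ∀ s' ∈ X, listVal t3 s = listVal t3 s' →
      ∃ s'' ∈ X, listVal t1 s'' = listVal t1 s ∧ listVal t3 s'' = listVal t3 s ∧
        listVal t2 s'' = listVal t2 s'
  | .and φ ψ, X => φ.Sat M X ∧ ψ.Sat M X
  | .or φ ψ, X => ∃ Y Z : Team M, Y ∪ Z = X ∧ φ.Sat M Y ∧ ψ.Sat M Z
  | .ex x φ, X => ∃ F : (ℕ → M) → Set M, (∀ s ∈ X, (F s).Nonempty) ∧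
      φ.Sat M {s' | ∃ s ∈ X, ∃ a ∈ F s, s' = Function.update s x a}
  | .all x φ, X => φ.Sat M {s' | ∃ s ∈ X, ∃ a : M, s' = Function.update s x a}

end TeamFormula

open FirstOrder Language

namespace TeamFormula

variable {L : Language}

/-- Substitution of variables for (free occurrences of) variables in an
independence-logic formula: apply `σ` to the free variables, keeping bound variables
fixed (capture is avoided by a separate side condition on `boundVars`). -/
def subst (σ : ℕ → ℕ) : TeamFormula L → TeamFormula L
  | .fo φ => .fo (φ.relabel σ)
  | .indep t1 t2 t3 =>
      .indep (t1.map (Term.relabel σ)) (t2.map (Term.relabel σ)) (t3.map (Term.relabel σ))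
  | .and φ ψ => .and (φ.subst σ) (ψ.subst σ)
  | .or φ ψ => .or (φ.subst σ) (ψ.subst σ)
  | .ex x φ => .ex x (φ.subst (Function.update σ x x))
  | .all x φ => .all x (φ.subst (Function.update σ x x))

/-- The set of (quantifier-)bound variables of an independence-logic formula. -/
def boundVars : TeamFormula L → Set ℕ
  | .fo _ => ∅
  | .indep _ _ _ => ∅
  | .and φ ψ => φ.boundVars ∪ ψ.boundVars
  | .or φ ψ => φ.boundVars ∪ ψ.boundVars
  | .ex x φ => insert x φ.boundVars
  | .all x φ => insert x φ.boundVars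

end TeamFormula

/-- The duplicated team `X(M/y) = {s(a/y) : s ∈ X, a ∈ M}`. -/
def dupTeam {M : Type*} (X : TeamFormula.Team M) (y : ℕ) : TeamFormula.Team M :=
  {s' | ∃ s ∈ X, ∃ a : M, s' = Function.update s y a}

section Aux

open TeamFormula

variable {L : Language} {M : Type*} [L.Structure M]

lemma term_realize_congr {t : L.Term ℕ} {v w : ℕ → M}
    (h : ∀ a ∈ t.varFinset, v a = w a) : t.realize v = t.realize w := by
  induction t with
  | var a => exact h a (by simp [Term.varFinset])
  | func f ts ih =>
    simp only [Term.realize]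
    congr 1
    funext i
    exact ih i fun a ha => h a (by
      simp only [Term.varFinset, Finset.mem_biUnion]
      exact ⟨i, Finset.mem_univ i, ha⟩)

lemma fo_realize_congr {φ : L.Formula ℕ} {v w : ℕ → M}
    (h : ∀ a ∈ φ.freeVarFinset, v a = w a) : φ.Realize v ↔ φ.Realize w := by
  have hsub : ↑φ.freeVarFinset ⊆ (↑φ.freeVarFinset : Set ℕ) := subset_rfl
  have hvw : (v ∘ (↑) : (↑φ.freeVarFinset : Set ℕ) → M) = w ∘ (↑) := by
    funext a
    exact h a (by exact_mod_cast a.2)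
  constructor <;> intro hr
  · have h1 := (BoundedFormula.realize_restrictFreeVar' hsub (v := v) (xs := default)).mpr hr
    rw [hvw] at h1
    exact (BoundedFormula.realize_restrictFreeVar' hsub (v := w) (xs := default)).mp h1
  · have h1 := (BoundedFormula.realize_restrictFreeVar' hsub (v := w) (xs := default)).mpr hr
    rw [← hvw] at h1
    exact (BoundedFormula.realize_restrictFreeVar' hsub (v := v) (xs := default)).mp h1

lemma listVal_congr {ts : List (L.Term ℕ)} {v w : ℕ → M}
    (h : ∀ u ∈ ts, ∀ a ∈ u.varFinset, v a = w a) : listVal ts v = listVal ts w := by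
  simp only [listVal]
  exact List.map_congr_left fun u hu => term_realize_congr (h u hu)

lemma mem_foldr_varFinset {l : List (L.Term ℕ)} {u : L.Term ℕ} (hu : u ∈ l) {a : ℕ}
    (ha : a ∈ u.varFinset) :
    a ∈ l.foldr (fun t s => (↑(Term.varFinset t) : Set ℕ) ∪ s) (∅ : Set ℕ) := by
  induction l with
  | nil => simp at hu
  | cons b l ih =>
    rcases List.mem_cons.mp hu with rfl | hu'
    · exact Or.inl (Finset.mem_coe.mpr ha)
    · exact Or.inr (ih hu')

lemma varFinset_subset_fr_indep {t1 t2 t3 : List (L.Term ℕ)} {u : L.Term ℕ}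
    (hu : u ∈ t1 ++ t2 ++ t3) {a : ℕ} (ha : a ∈ u.varFinset) :
    a ∈ (TeamFormula.indep t1 t2 t3 : TeamFormula L).Fr := by
  simp only [TeamFormula.Fr]
  exact mem_foldr_varFinset hu ha

/-- Locality: satisfaction only depends on the values of assignments on a set of
variables containing the free variables. -/
lemma sat_local (φ : TeamFormula L) (V : Set ℕ) (hV : φ.Fr ⊆ V)
    (X Y : Team M)
    (hXY : ∀ s ∈ X, ∃ t ∈ Y, ∀ v ∈ V, s v = t v)
    (hYX : ∀ t ∈ Y, ∃ s ∈ X, ∀ v ∈ V, s v = t v)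
    (h : φ.Sat M X) : φ.Sat M Y := by
  induction φ generalizing V X Y with
  | fo ψ =>
    intro t ht
    obtain ⟨s, hs, hag⟩ := hYX t ht
    exact (fo_realize_congr fun a haf => hag a (hV haf)).mp (h s hs)
  | indep t1 t2 t3 =>
    intro t ht t' ht' heq
    obtain ⟨s, hs, hag⟩ := hYX t ht
    obtain ⟨s', hs', hag'⟩ := hYX t' ht'
    have key : ∀ (u : L.Term ℕ), u ∈ t1 ++ t2 ++ t3 → ∀ a ∈ u.varFinset, a ∈ V :=
      fun u hu a ha => hV (varFinset_subset_fr_indep hu ha)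
    have lv : ∀ (ts : List (L.Term ℕ)), (∀ u ∈ ts, u ∈ t1 ++ t2 ++ t3) →
        ∀ (r r' : ℕ → M), (∀ v ∈ V, r v = r' v) → listVal ts r = listVal ts r' := by
      intro ts hts r r' hr
      exact listVal_congr fun u hu a ha => hr a (key u (hts u hu) a ha)
    have m1 : ∀ u ∈ t1, u ∈ t1 ++ t2 ++ t3 := fun u hu => by simp [hu]
    have m2 : ∀ u ∈ t2, u ∈ t1 ++ t2 ++ t3 := fun u hu => by simp [hu]
    have m3 : ∀ u ∈ t3, u ∈ t1 ++ t2 ++ t3 := fun u hu => by simp [hu]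
    have h3 : listVal t3 s = listVal t3 s' := by
      rw [lv t3 m3 s t hag, lv t3 m3 s' t' hag', heq]
    obtain ⟨s'', hs'', e1, e3, e2⟩ := h s hs s' hs' h3
    obtain ⟨t'', ht'', hag''⟩ := hXY s'' hs''
    refine ⟨t'', ht'', ?_, ?_, ?_⟩
    · rw [← lv t1 m1 s'' t'' hag'', ← lv t1 m1 s t hag, e1]
    · rw [← lv t3 m3 s'' t'' hag'', ← lv t3 m3 s t hag, e3]
    · rw [← lv t2 m2 s'' t'' hag'', ← lv t2 m2 s' t' hag', e2]
  | and φ ψ ihφ ihψ =>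
    have hVu := Set.union_subset_iff.mp hV
    exact ⟨ihφ V hVu.1 X Y hXY hYX h.1, ihψ V hVu.2 X Y hXY hYX h.2⟩
  | or φ ψ ihφ ihψ =>
    obtain ⟨X1, X2, hun, h1, h2⟩ := h
    have hVu := Set.union_subset_iff.mp hV
    refine ⟨{t ∈ Y | ∃ s ∈ X1, ∀ v ∈ V, s v = t v},
            {t ∈ Y | ∃ s ∈ X2, ∀ v ∈ V, s v = t v}, ?_, ?_, ?_⟩
    · apply Set.Subset.antisymm
      · rintro t (⟨ht, _⟩ | ⟨ht, _⟩) <;> exact ht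
      · intro t ht
        obtain ⟨s, hs, hag⟩ := hYX t ht
        rw [← hun] at hs
        rcases hs with hs | hs
        · exact Or.inl ⟨ht, s, hs, hag⟩
        · exact Or.inr ⟨ht, s, hs, hag⟩
    · refine ihφ V hVu.1 X1 _ ?_ ?_ h1
      · intro s hs
        obtain ⟨t, ht, hag⟩ := hXY s (by rw [← hun]; exact Or.inl hs)
        exact ⟨t, ⟨ht, s, hs, hag⟩, hag⟩
      · rintro t ⟨_, s, hs, hag⟩
        exact ⟨s, hs, hag⟩
    · refine ihψ V hVu.2 X2 _ ?_ ?_ h2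
      · intro s hs
        obtain ⟨t, ht, hag⟩ := hXY s (by rw [← hun]; exact Or.inr hs)
        exact ⟨t, ⟨ht, s, hs, hag⟩, hag⟩
      · rintro t ⟨_, s, hs, hag⟩
        exact ⟨s, hs, hag⟩
  | ex z φ ih =>
    obtain ⟨F, hF, hsat⟩ := h
    refine ⟨fun t => {a | ∃ s ∈ X, (∀ v ∈ V, s v = t v) ∧ a ∈ F s}, ?_, ?_⟩
    · intro t ht
      obtain ⟨s, hs, hag⟩ := hYX t ht
      obtain ⟨a, ha⟩ := hF s hs
      exact ⟨a, s, hs, hag, ha⟩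
    · have hfr : φ.Fr ⊆ insert z V := by
        intro v hv
        by_cases hvz : v = z
        · exact hvz ▸ Set.mem_insert _ _
        · exact Set.mem_insert_of_mem _ (hV ⟨hv, hvz⟩)
      refine ih (insert z V) hfr _ _ ?_ ?_ hsat
      · rintro s' ⟨s, hs, a, haF, rfl⟩
        obtain ⟨t, ht, hag⟩ := hXY s hs
        refine ⟨Function.update t z a, ⟨t, ht, a, ⟨s, hs, hag, haF⟩, rfl⟩, ?_⟩
        intro v _
        by_cases hvz : v = z
        · subst hvz; simp
        · simp only [Function.update_of_ne hvz]
          rcases ‹v ∈ insert z V› with h' | h'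
          · exact absurd h' hvz
          · exact hag v h'
      · rintro t' ⟨t, ht, a, ⟨s, hs, hag, haF⟩, rfl⟩
        refine ⟨Function.update s z a, ⟨s, hs, a, haF, rfl⟩, ?_⟩
        intro v hv
        by_cases hvz : v = z
        · subst hvz; simp
        · simp only [Function.update_of_ne hvz]
          rcases hv with h' | h'
          · exact absurd h' hvz
          · exact hag v h'
  | all z φ ih =>
    have hfr : φ.Fr ⊆ insert z V := by
      intro v hv
      by_cases hvz : v = z
      · exact hvz ▸ Set.mem_insert _ _
      · exact Set.mem_insert_of_mem _ (hV ⟨hv, hvz⟩)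
    refine ih (insert z V) hfr _ _ ?_ ?_ h
    · rintro s' ⟨s, hs, a, rfl⟩
      obtain ⟨t, ht, hag⟩ := hXY s hs
      refine ⟨Function.update t z a, ⟨t, ht, a, rfl⟩, ?_⟩
      intro v hv
      by_cases hvz : v = z
      · subst hvz; simp
      · simp only [Function.update_of_ne hvz]
        rcases hv with h' | h'
        · exact absurd h' hvz
        · exact hag v h'
    · rintro t' ⟨t, ht, a, rfl⟩
      obtain ⟨s, hs, hag⟩ := hYX t ht
      refine ⟨Function.update s z a, ⟨s, hs, a, rfl⟩, ?_⟩
      intro v hv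
      by_cases hvz : v = z
      · subst hvz; simp
      · simp only [Function.update_of_ne hvz]
        rcases hv with h' | h'
        · exact absurd h' hvz
        · exact hag v h'

lemma listVal_relabel (σ : ℕ → ℕ) (ts : List (L.Term ℕ)) (s : ℕ → M) :
    listVal (ts.map (Term.relabel σ)) s = listVal ts (s ∘ σ) := by
  simp [listVal, List.map_map, Function.comp_def, Term.realize_relabel]

lemma update_comp_update (σ : ℕ → ℕ) (z : ℕ) (hz : ∀ v, v ≠ z → σ v ≠ z)
    (s : ℕ → M) (a : M) :
    Function.update s z a ∘ Function.update σ z z = Function.update (s ∘ σ) z a := by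
  funext v
  by_cases hvz : v = z
  · subst hvz
    show Function.update s v a (Function.update σ v v v) = Function.update (s ∘ σ) v a v
    have h1 : Function.update σ v v v = v := Function.update_self v v σ
    rw [h1, Function.update_self, Function.update_self]
  · have h1 : Function.update σ z z v = σ v := by rw [Function.update_of_ne hvz]
    have h2 : Function.update (s ∘ σ) z a v = s (σ v) := by
      rw [Function.update_of_ne hvz]; rfl
    have h3 : Function.update s z a (σ v) = s (σ v) := by
      rw [Function.update_of_ne (hz v hvz)]
    show Function.update s z a (Function.update σ z z v) = Function.update (s ∘ σ) z a v
    rw [h1, h3, h2]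

/-- The substitution lemma: under a capture-avoidance condition,
`M ⊨_X φ[σ]` iff `M ⊨_{σ X} φ` where `σ X = {s ∘ σ : s ∈ X}`. -/
lemma sat_subst (φ : TeamFormula L) (σ : ℕ → ℕ)
    (hσ : ∀ z ∈ φ.boundVars, ∀ v, v ≠ z → σ v ≠ z) (X : Team M) :
    (φ.subst σ).Sat M X ↔ φ.Sat M {t | ∃ s ∈ X, t = s ∘ σ} := by
  induction φ generalizing σ X with
  | fo ψ =>
    constructor
    · rintro h t ⟨s, hs, rfl⟩
      have := h s hs
      rwa [Formula.realize_relabel] at this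
    · intro h s hs
      exact (Formula.realize_relabel).mpr (h (s ∘ σ) ⟨s, hs, rfl⟩)
  | indep t1 t2 t3 =>
    constructor
    · rintro h t ⟨s, hs, rfl⟩ t' ⟨s', hs', rfl⟩ he
      rw [← listVal_relabel, ← listVal_relabel] at he
      obtain ⟨s'', hs'', e1, e3, e2⟩ := h s hs s' hs' he
      refine ⟨s'' ∘ σ, ⟨s'', hs'', rfl⟩, ?_, ?_, ?_⟩
      · rw [← listVal_relabel, ← listVal_relabel, e1]
      · rw [← listVal_relabel, ← listVal_relabel, e3]
      · rw [← listVal_relabel, ← listVal_relabel, e2]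
    · rintro h s hs s' hs' he
      rw [listVal_relabel, listVal_relabel] at he
      obtain ⟨t'', ⟨s'', hs'', rfl⟩, e1, e3, e2⟩ :=
        h (s ∘ σ) ⟨s, hs, rfl⟩ (s' ∘ σ) ⟨s', hs', rfl⟩ he
      refine ⟨s'', hs'', ?_, ?_, ?_⟩
      · rw [listVal_relabel, listVal_relabel, e1]
      · rw [listVal_relabel, listVal_relabel, e3]
      · rw [listVal_relabel, listVal_relabel, e2]
  | and φ ψ ihφ ihψ =>
    have h1 : ∀ z ∈ φ.boundVars, ∀ v, v ≠ z → σ v ≠ z :=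
      fun z hz => hσ z (Or.inl hz)
    have h2 : ∀ z ∈ ψ.boundVars, ∀ v, v ≠ z → σ v ≠ z :=
      fun z hz => hσ z (Or.inr hz)
    exact and_congr (ihφ σ h1 X) (ihψ σ h2 X)
  | or φ ψ ihφ ihψ =>
    have h1 : ∀ z ∈ φ.boundVars, ∀ v, v ≠ z → σ v ≠ z :=
      fun z hz => hσ z (Or.inl hz)
    have h2 : ∀ z ∈ ψ.boundVars, ∀ v, v ≠ z → σ v ≠ z :=
      fun z hz => hσ z (Or.inr hz)
    constructor
    · rintro ⟨Y, Z, hun, hY, hZ⟩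
      refine ⟨{t | ∃ s ∈ Y, t = s ∘ σ}, {t | ∃ s ∈ Z, t = s ∘ σ}, ?_, ?_, ?_⟩
      · ext t
        constructor
        · rintro (⟨s, hs, rfl⟩ | ⟨s, hs, rfl⟩)
          · exact ⟨s, by rw [← hun]; exact Or.inl hs, rfl⟩
          · exact ⟨s, by rw [← hun]; exact Or.inr hs, rfl⟩
        · rintro ⟨s, hs, rfl⟩
          rw [← hun] at hs
          rcases hs with hs | hs
          · exact Or.inl ⟨s, hs, rfl⟩
          · exact Or.inr ⟨s, hs, rfl⟩
      · exact (ihφ σ h1 Y).mp hY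
      · exact (ihψ σ h2 Z).mp hZ
    · rintro ⟨Y, Z, hun, hY, hZ⟩
      refine ⟨{s ∈ X | s ∘ σ ∈ Y}, {s ∈ X | s ∘ σ ∈ Z}, ?_, ?_, ?_⟩
      · ext s
        constructor
        · rintro (⟨hs, _⟩ | ⟨hs, _⟩) <;> exact hs
        · intro hs
          have : s ∘ σ ∈ Y ∪ Z := by rw [hun]; exact ⟨s, hs, rfl⟩
          rcases this with h' | h'
          · exact Or.inl ⟨hs, h'⟩
          · exact Or.inr ⟨hs, h'⟩
      · refine (ihφ σ h1 _).mpr ?_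
        have : {t | ∃ s ∈ {s ∈ X | s ∘ σ ∈ Y}, t = s ∘ σ} = Y := by
          ext t
          constructor
          · rintro ⟨s, ⟨_, hsY⟩, rfl⟩; exact hsY
          · intro ht
            have : t ∈ Y ∪ Z := Or.inl ht
            rw [hun] at this
            obtain ⟨s, hs, rfl⟩ := this
            exact ⟨s, ⟨hs, ht⟩, rfl⟩
        rw [this]; exact hY
      · refine (ihψ σ h2 _).mpr ?_
        have : {t | ∃ s ∈ {s ∈ X | s ∘ σ ∈ Z}, t = s ∘ σ} = Z := by
          ext t
          constructor
          · rintro ⟨s, ⟨_, hsZ⟩, rfl⟩; exact hsZ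
          · intro ht
            have : t ∈ Y ∪ Z := Or.inr ht
            rw [hun] at this
            obtain ⟨s, hs, rfl⟩ := this
            exact ⟨s, ⟨hs, ht⟩, rfl⟩
        rw [this]; exact hZ
  | ex z φ ih =>
    have hz : ∀ v, v ≠ z → σ v ≠ z := hσ z (Set.mem_insert _ _)
    have hσ' : ∀ w ∈ φ.boundVars, ∀ v, v ≠ w → Function.update σ z z v ≠ w := by
      intro w hw v hvw
      by_cases hvz : v = z
      · subst hvz
        rw [Function.update_self]
        exact fun hzw => hvw hzw
      · rw [Function.update_of_ne hvz]
        exact hσ w (Set.mem_insert_of_mem _ hw) v hvw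
    constructor
    · rintro ⟨F, hF, hsat⟩
      refine ⟨fun t => {a | ∃ s ∈ X, s ∘ σ = t ∧ a ∈ F s}, ?_, ?_⟩
      · rintro t ⟨s, hs, rfl⟩
        obtain ⟨a, ha⟩ := hF s hs
        exact ⟨a, s, hs, rfl, ha⟩
      · have := (ih (Function.update σ z z) hσ' _).mp hsat
        have heq : {t | ∃ s' ∈ {s' | ∃ s ∈ X, ∃ a ∈ F s, s' = Function.update s z a},
            t = s' ∘ Function.update σ z z} =
            {s' | ∃ t ∈ {t | ∃ s ∈ X, t = s ∘ σ},
              ∃ a ∈ (fun t => {a | ∃ s ∈ X, s ∘ σ = t ∧ a ∈ F s}) t,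
              s' = Function.update t z a} := by
          ext t'
          constructor
          · rintro ⟨s', ⟨s, hs, a, haF, rfl⟩, rfl⟩
            exact ⟨s ∘ σ, ⟨s, hs, rfl⟩, a, ⟨s, hs, rfl, haF⟩,
              update_comp_update σ z hz s a⟩
          · rintro ⟨t, ⟨s0, hs0, rfl⟩, a, ⟨s, hs, hsσ, haF⟩, rfl⟩
            refine ⟨Function.update s z a, ⟨s, hs, a, haF, rfl⟩, ?_⟩
            rw [update_comp_update σ z hz s a, hsσ]
        rw [heq] at this
        exact this
    · rintro ⟨F, hF, hsat⟩
      refine ⟨fun s => F (s ∘ σ), ?_, ?_⟩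
      · intro s hs
        exact hF (s ∘ σ) ⟨s, hs, rfl⟩
      · refine (ih (Function.update σ z z) hσ' _).mpr ?_
        have heq : {t | ∃ s' ∈ {s' | ∃ s ∈ X, ∃ a ∈ F (s ∘ σ), s' = Function.update s z a},
            t = s' ∘ Function.update σ z z} =
            {s' | ∃ t ∈ {t | ∃ s ∈ X, t = s ∘ σ}, ∃ a ∈ F t, s' = Function.update t z a} := by
          ext t'
          constructor
          · rintro ⟨s', ⟨s, hs, a, haF, rfl⟩, rfl⟩
            exact ⟨s ∘ σ, ⟨s, hs, rfl⟩, a, haF,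
              update_comp_update σ z hz s a⟩
          · rintro ⟨t, ⟨s, hs, rfl⟩, a, haF, rfl⟩
            refine ⟨Function.update s z a, ⟨s, hs, a, haF, rfl⟩, ?_⟩
            rw [update_comp_update σ z hz s a]
        rw [heq]
        exact hsat
  | all z φ ih =>
    have hz : ∀ v, v ≠ z → σ v ≠ z := hσ z (Set.mem_insert _ _)
    have hσ' : ∀ w ∈ φ.boundVars, ∀ v, v ≠ w → Function.update σ z z v ≠ w := by
      intro w hw v hvw
      by_cases hvz : v = z
      · subst hvz
        rw [Function.update_self]
        exact fun hzw => hvw hzw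
      · rw [Function.update_of_ne hvz]
        exact hσ w (Set.mem_insert_of_mem _ hw) v hvw
    have heq : {t | ∃ s' ∈ {s' | ∃ s ∈ X, ∃ a : M, s' = Function.update s z a},
        t = s' ∘ Function.update σ z z} =
        {s' | ∃ t ∈ {t | ∃ s ∈ X, t = s ∘ σ}, ∃ a : M, s' = Function.update t z a} := by
      ext t'
      constructor
      · rintro ⟨s', ⟨s, hs, a, rfl⟩, rfl⟩
        exact ⟨s ∘ σ, ⟨s, hs, rfl⟩, a, update_comp_update σ z hz s a⟩
      · rintro ⟨t, ⟨s, hs, rfl⟩, a, rfl⟩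
        refine ⟨Function.update s z a, ⟨s, hs, a, rfl⟩, ?_⟩
        rw [update_comp_update σ z hz s a]
    constructor
    · intro h
      have := (ih (Function.update σ z z) hσ' _).mp h
      rw [heq] at this
      exact this
    · intro h
      refine (ih (Function.update σ z z) hσ' _).mpr ?_
      rw [heq]
      exact h

end Aux

/-- soundness of universal substitution (rule 5).  If `M ⊨_X ∀x A` and `y`
does not occur free in `∀x A` (nor becomes bound in the substitution), then
`M ⊨_{X(M/y)} A(y/x)`.  Consequently, if `B` follows semantically from `A(y/x)` together
with side assumptions `T` in which `y` does not occur free and which hold in `X`, then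
`M ⊨_X ∀y B`. -/
theorem TeamFormula.universal_substitution_sound {L : FirstOrder.Language} {M : Type*}
    [L.Structure M] (A B : TeamFormula L) (x y : ℕ)
    (σ : ℕ → ℕ) (hσ : σ x = y) (hσ' : ∀ v, v ≠ x → σ v = v)
    (hyFr : y ∉ (TeamFormula.all x A).Fr) (hyBound : y ∉ A.boundVars)
    (T : Set (TeamFormula L))
    (X : TeamFormula.Team M)
    (hA : (TeamFormula.all x A).Sat M X)
    (hT : ∀ C ∈ T, y ∉ C.Fr ∧ C.Sat M X)
    (hcons : ∀ Y : TeamFormula.Team M,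
      (A.subst σ).Sat M Y → (∀ C ∈ T, C.Sat M Y) → B.Sat M Y) :
    (A.subst σ).Sat M (dupTeam X y) ∧ (TeamFormula.all y B).Sat M X := by
  have hyFrA : ∀ _ : y ∈ A.Fr, y = x := by
    intro h
    by_contra hyx
    exact hyFr ⟨h, hyx⟩
  have hcap : ∀ z ∈ A.boundVars, ∀ v, v ≠ z → σ v ≠ z := by
    intro z hz v hvz
    by_cases hvx : v = x
    · subst hvx
      rw [hσ]
      intro h
      exact hyBound (h ▸ hz)
    · rw [hσ' v hvx]
      exact hvz
  have hAteam : A.Sat M {s' | ∃ s ∈ X, ∃ a : M, s' = Function.update s x a} := hA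
  have part1 : (A.subst σ).Sat M (dupTeam X y) := by
    rw [sat_subst A σ hcap]
    refine sat_local A A.Fr subset_rfl _ _ ?_ ?_ hAteam
    · rintro s' ⟨s, hs, a, rfl⟩
      refine ⟨Function.update s y a ∘ σ, ⟨Function.update s y a, ⟨s, hs, a, rfl⟩, rfl⟩, ?_⟩
      intro v hv
      by_cases hvx : v = x
      · subst hvx
        show Function.update s v a v = (Function.update s y a ∘ σ) v
        rw [Function.comp_apply, hσ, Function.update_self, Function.update_self]
      · rw [Function.update_of_ne hvx, Function.comp_apply, hσ' v hvx]
        have hvy : v ≠ y := fun h => hvx (h.trans (hyFrA (h ▸ hv)))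
        rw [Function.update_of_ne hvy]
    · rintro t ⟨u, ⟨s, hs, a, rfl⟩, rfl⟩
      refine ⟨Function.update s x a, ⟨s, hs, a, rfl⟩, ?_⟩
      intro v hv
      by_cases hvx : v = x
      · subst hvx
        show Function.update s v a v = (Function.update s y a ∘ σ) v
        rw [Function.comp_apply, hσ, Function.update_self, Function.update_self]
      · rw [Function.update_of_ne hvx, Function.comp_apply, hσ' v hvx]
        have hvy : v ≠ y := fun h => hvx (h.trans (hyFrA (h ▸ hv)))
        rw [Function.update_of_ne hvy]
  refine ⟨part1, ?_⟩
  show B.Sat M {s' | ∃ s ∈ X, ∃ a : M, s' = Function.update s y a}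
  apply hcons
  · exact part1
  · intro C hC
    obtain ⟨hyC, hCX⟩ := hT C hC
    refine sat_local C C.Fr subset_rfl X _ ?_ ?_ hCX
    · intro s hs
      exact ⟨s, ⟨s, hs, s y, (Function.update_eq_self _ _).symm⟩, fun v _ => rfl⟩
    · rintro t ⟨s, hs, a, rfl⟩
      refine ⟨s, hs, fun v hv => ?_⟩
      have hvy : v ≠ y := fun h => hyC (h ▸ hv)
      rw [Function.update_of_ne hvy]
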